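/- arXiv:1902.01072 — 3 statements merged into one kernel-verified Lean document; each statement's English description precedes it below -/
import Mathlib

section
/- Let L be a linear integral operator Lφ(x) = ∫ V(x,y)φ(y)dy on C⁰ of the closed ball \overline{B_R} ⊂ ℝ^N, with V continuous nonnegative and V(x,y) > 0 whenever |x−y| ≤ r (some r > 0). Suppose for 0 < R < R' the operators L_R and L_{R'} (integration over B_R and B_{R'} respectively) admit principal eigenvalues λ_R, λ_{R'} with positive continuous eigenfunctions φ_R on \overline{B_R} and φ_{R'} on \overline{B_{R'}}. Then λ_R < λ_{R'}. -/
open MeasureTheory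

private lemma int_pos_aux {N : ℕ} (f : EuclideanSpace ℝ (Fin N) → ℝ)
    (s U : Set (EuclideanSpace ℝ (Fin N)))
    (hs : MeasurableSet s) (hint : IntegrableOn f s)
    (hnn : ∀ y ∈ s, 0 ≤ f y) (hU : IsOpen U) (hUne : U.Nonempty) (hUs : U ⊆ s)
    (hUfin : volume U < ⊤) (c : ℝ) (hc : 0 < c) (hfc : ∀ y ∈ U, c ≤ f y) :
    0 < ∫ y in s, f y := by
  have hUm := hU.measurableSet
  have hvolpos : 0 < (volume U).toReal :=
    ENNReal.toReal_pos (hU.measure_pos volume hUne).ne' hUfin.ne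
  have h2 : (volume U).toReal * c ≤ ∫ y in U, f y := by
    have := setIntegral_mono_on (integrableOn_const hUfin.ne)
      (hint.mono_set hUs) hUm hfc
    simpa [smul_eq_mul, measureReal_def] using this
  have h1 : (∫ y in U, f y) ≤ ∫ y in s, f y := by
    apply setIntegral_mono_set hint ?_ (HasSubset.Subset.eventuallyLE hUs)
    exact (ae_restrict_iff' hs).2 (Filter.Eventually.of_forall hnn)
  nlinarith [mul_pos hvolpos hc]

private lemma nbhd_of_pos_aux {N : ℕ} (g : EuclideanSpace ℝ (Fin N) → ℝ)
    (s : Set (EuclideanSpace ℝ (Fin N))) (y0 : EuclideanSpace ℝ (Fin N))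
    (hg : ContinuousWithinAt g s y0) (h : 0 < g y0) :
    ∃ U, IsOpen U ∧ y0 ∈ U ∧ ∀ y ∈ U ∩ s, g y0 / 2 ≤ g y := by
  have hmem : {z : ℝ | g y0 / 2 < z} ∈ nhds (g y0) := Ioi_mem_nhds (by linarith)
  have h2 := hg hmem
  rcases mem_nhdsWithin.1 h2 with ⟨U, hUo, hyU, hUs⟩
  exact ⟨U, hUo, hyU, fun y hy => (hUs hy).le⟩

private lemma zero_on_ball_aux {N : ℕ} (f : EuclideanSpace ℝ (Fin N) → ℝ) (R : ℝ) (hR : 0 < R)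
    (hf : ContinuousOn f (Metric.closedBall 0 R))
    (hnn : ∀ y ∈ Metric.closedBall (0 : EuclideanSpace ℝ (Fin N)) R, 0 ≤ f y)
    (hzero : (∫ y in Metric.closedBall (0 : EuclideanSpace ℝ (Fin N)) R, f y) = 0) :
    ∀ y ∈ Metric.closedBall (0 : EuclideanSpace ℝ (Fin N)) R, f y = 0 := by
  intro y0 hy0
  by_contra hne
  have hpos : 0 < f y0 := lt_of_le_of_ne (hnn y0 hy0) (Ne.symm hne)
  obtain ⟨U, hUo, hyU, hUbound⟩ := nbhd_of_pos_aux f _ y0 (hf y0 hy0) hpos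
  have hmem : y0 ∈ closure (Metric.ball (0 : EuclideanSpace ℝ (Fin N)) R) := by
    rw [closure_ball 0 hR.ne']; exact hy0
  have hne' : (U ∩ Metric.ball (0 : EuclideanSpace ℝ (Fin N)) R).Nonempty :=
    mem_closure_iff.1 hmem U hUo hyU
  have hint : IntegrableOn f (Metric.closedBall 0 R) :=
    hf.integrableOn_compact (isCompact_closedBall 0 R)
  have hposint := int_pos_aux f (Metric.closedBall 0 R) (U ∩ Metric.ball 0 R)
    measurableSet_closedBall hint hnn
    (hUo.inter Metric.isOpen_ball) hne'
    (Set.inter_subset_right.trans Metric.ball_subset_closedBall)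
    (lt_of_le_of_lt (measure_mono Set.inter_subset_right) measure_ball_lt_top)
    (f y0 / 2) (by linarith)
    (fun y hy => hUbound y ⟨hy.1, Metric.ball_subset_closedBall hy.2⟩)
  rw [hzero] at hposint
  exact lt_irrefl 0 hposint

/-- Strict monotonicity of the principal eigenvalue of the truncated operators
`L_R φ(x) = ∫_{B_R} V(x,y) φ(y) dy` with respect to the radius `R`. -/
theorem stmt6 (N : ℕ) (hN : 1 ≤ N) (r : ℝ) (hr : 0 < r)
    (V : EuclideanSpace ℝ (Fin N) → EuclideanSpace ℝ (Fin N) → ℝ)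
    (hVc : Continuous (Function.uncurry V)) (hVnn : ∀ x y, 0 ≤ V x y)
    (hVpos : ∀ x y, dist x y ≤ r → 0 < V x y)
    (R R' : ℝ) (hR : 0 < R) (hRR' : R < R')
    (lamR lamR' : ℝ)
    (φR φR' : EuclideanSpace ℝ (Fin N) → ℝ)
    (hφRc : ContinuousOn φR (Metric.closedBall 0 R))
    (hφRpos : ∀ x ∈ Metric.closedBall (0 : EuclideanSpace ℝ (Fin N)) R, 0 < φR x)
    (heigR : ∀ x ∈ Metric.closedBall (0 : EuclideanSpace ℝ (Fin N)) R,
      (∫ y in Metric.closedBall (0 : EuclideanSpace ℝ (Fin N)) R, V x y * φR y) = lamR * φR x)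
    (hφR'c : ContinuousOn φR' (Metric.closedBall 0 R'))
    (hφR'pos : ∀ x ∈ Metric.closedBall (0 : EuclideanSpace ℝ (Fin N)) R', 0 < φR' x)
    (heigR' : ∀ x ∈ Metric.closedBall (0 : EuclideanSpace ℝ (Fin N)) R',
      (∫ y in Metric.closedBall (0 : EuclideanSpace ℝ (Fin N)) R', V x y * φR' y)
        = lamR' * φR' x) :
    lamR < lamR' := by
  classical
  by_contra hcon
  push_neg at hcon
  haveI hNE : Nonempty (Fin N) := ⟨⟨0, hN⟩⟩
  set K := Metric.closedBall (0 : EuclideanSpace ℝ (Fin N)) R with hKdef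
  set K' := Metric.closedBall (0 : EuclideanSpace ℝ (Fin N)) R' with hK'def
  have hKm : MeasurableSet K := hKdef ▸ measurableSet_closedBall
  have hK'm : MeasurableSet K' := hK'def ▸ measurableSet_closedBall
  have hKK' : K ⊆ K' := Metric.closedBall_subset_closedBall hRR'.le
  have hKc : IsCompact K := isCompact_closedBall _ _
  have hK'c : IsCompact K' := isCompact_closedBall _ _
  have hKne : K.Nonempty := ⟨0, Metric.mem_closedBall_self hR.le⟩
  -- minimize the ratio φR'/φR on K
  have hρc : ContinuousOn (fun x => φR' x / φR x) K :=
    (hφR'c.mono hKK').div hφRc (fun x hx => (hφRpos x hx).ne')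
  obtain ⟨xm, hxmK, hxmmin⟩ := hKc.exists_isMinOn hKne hρc
  set t := φR' xm / φR xm with htdef
  have ht : 0 < t := div_pos (hφR'pos xm (hKK' hxmK)) (hφRpos xm hxmK)
  set w : EuclideanSpace ℝ (Fin N) → ℝ := fun y => φR' y - t * φR y with hwdef
  have hwnn : ∀ y ∈ K, 0 ≤ w y := by
    intro y hy
    have h1 : t ≤ φR' y / φR y := hxmmin hy
    have h2 := (le_div_iff₀ (hφRpos y hy)).1 h1
    simp only [hwdef]; linarith
  have hwc : ContinuousOn w K := (hφR'c.mono hKK').sub (continuousOn_const.mul hφRc)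
  have hwxm : w xm = 0 := by
    simp [hwdef, htdef, div_mul_cancel₀ _ (hφRpos xm hxmK).ne']
  -- key claim at any zero of w
  have key : ∀ x0 ∈ K, w x0 = 0 →
      (∀ y ∈ K, dist x0 y ≤ r → w y = 0) ∧ (∫ y in K' \ K, V x0 y * φR' y) = 0 := by
    intro x0 hx0 hwx0
    have hVx0 : Continuous fun y => V x0 y := hVc.comp (Continuous.prodMk_right x0)
    have hint1 : IntegrableOn (fun y => V x0 y * φR y) K :=
      (hVx0.continuousOn.mul hφRc).integrableOn_compact hKc
    have hint2 : IntegrableOn (fun y => V x0 y * φR' y) K' :=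
      (hVx0.continuousOn.mul hφR'c).integrableOn_compact hK'c
    have hint3 : IntegrableOn (fun y => V x0 y * w y) K :=
      (hVx0.continuousOn.mul hwc).integrableOn_compact hKc
    have hsplit : (∫ y in K', V x0 y * φR' y)
        = (∫ y in K, V x0 y * φR' y) + ∫ y in K' \ K, V x0 y * φR' y := by
      rw [← setIntegral_union Set.disjoint_sdiff_right (hK'm.diff hKm)
        (hint2.mono_set hKK') (hint2.mono_set Set.diff_subset),
        Set.union_diff_cancel hKK']
    have hpt : ∀ y, V x0 y * φR' y = t * (V x0 y * φR y) + V x0 y * w y := by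
      intro y; simp only [hwdef]; ring
    have hSK : (∫ y in K, V x0 y * φR' y)
        = t * (lamR * φR x0) + ∫ y in K, V x0 y * w y := by
      calc (∫ y in K, V x0 y * φR' y)
          = ∫ y in K, (t * (V x0 y * φR y) + V x0 y * w y) :=
            setIntegral_congr_fun hKm (fun y _ => hpt y)
        _ = t * (∫ y in K, V x0 y * φR y) + ∫ y in K, V x0 y * w y := by
            rw [integral_add (hint1.const_mul t) hint3, integral_const_mul _ _]
        _ = t * (lamR * φR x0) + ∫ y in K, V x0 y * w y := by rw [heigR x0 hx0]
    have hI : 0 ≤ ∫ y in K, V x0 y * w y :=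
      setIntegral_nonneg hKm (fun y hy => mul_nonneg (hVnn _ _) (hwnn y hy))
    have hA : 0 ≤ ∫ y in K' \ K, V x0 y * φR' y :=
      setIntegral_nonneg (hK'm.diff hKm)
        (fun y hy => mul_nonneg (hVnn _ _) (hφR'pos y hy.1).le)
    have h2 : φR' x0 = t * φR x0 := by
      have := hwx0; simp only [hwdef] at this; linarith
    have hEq : lamR' * (t * φR x0)
        = t * (lamR * φR x0) + (∫ y in K, V x0 y * w y)
          + ∫ y in K' \ K, V x0 y * φR' y := by
      have h1 := heigR' x0 (hKK' hx0)
      rw [← h2, ← h1, hsplit, hSK]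
    have hφpos := hφRpos x0 hx0
    have hI0 : (∫ y in K, V x0 y * w y) = 0 := by nlinarith [mul_pos ht hφpos]
    have hA0 : (∫ y in K' \ K, V x0 y * φR' y) = 0 := by nlinarith [mul_pos ht hφpos]
    refine ⟨?_, hA0⟩
    have hzero := zero_on_ball_aux (fun y => V x0 y * w y) R hR
      (hVx0.continuousOn.mul (hKdef ▸ hwc))
      (fun y hy => mul_nonneg (hVnn _ _) (hwnn y hy)) (hKdef ▸ hI0)
    intro y hy hdist
    rcases mul_eq_zero.1 (hzero y hy) with h | h
    · exact absurd h (hVpos x0 y hdist).ne'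
    · exact h
  -- the zero set of w, and a point of maximal norm in it
  have hZclosed : IsClosed {x | x ∈ K ∧ w x = 0} := by
    have h : IsClosed (K ∩ w ⁻¹' {0}) :=
      hwc.preimage_isClosed_of_isClosed (hKdef ▸ Metric.isClosed_closedBall) isClosed_singleton
    exact h
  have hZcomp : IsCompact {x | x ∈ K ∧ w x = 0} :=
    hKc.of_isClosed_subset hZclosed (fun x hx => hx.1)
  obtain ⟨x1, hx1Z, hx1max⟩ := hZcomp.exists_isMaxOn ⟨xm, hxmK, hwxm⟩
    continuous_norm.continuousOn
  have hx1K : x1 ∈ K := hx1Z.1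
  have hx1le : ‖x1‖ ≤ R := by
    have := hx1K; rw [hKdef, Metric.mem_closedBall, dist_zero_right] at this; exact this
  -- the maximal-norm zero lies on the boundary
  have hx1R : ‖x1‖ = R := by
    by_contra hne
    have hlt : ‖x1‖ < R := lt_of_le_of_ne hx1le hne
    haveI : Nontrivial (EuclideanSpace ℝ (Fin N)) := inferInstance
    obtain ⟨e, he⟩ := exists_norm_eq (EuclideanSpace ℝ (Fin N)) (zero_le_one)
    set ε := min r (R - ‖x1‖) with hεdef
    have hεpos : 0 < ε := lt_min hr (by linarith)
    set u := if x1 = 0 then e else ‖x1‖⁻¹ • x1 with hudef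
    have hu1 : ‖u‖ = 1 := by
      rw [hudef]; split_ifs with h
      · exact he
      · rw [norm_smul, norm_inv, norm_norm, inv_mul_cancel₀ (norm_ne_zero_iff.2 h)]
    have hx1u : x1 = ‖x1‖ • u := by
      rw [hudef]; split_ifs with h
      · simp [h]
      · rw [smul_smul, mul_inv_cancel₀ (norm_ne_zero_iff.2 h), one_smul]
    set x2 := x1 + ε • u with hx2def
    have hx2norm : ‖x2‖ = ‖x1‖ + ε := by
      rw [hx2def]; nth_rewrite 1 [hx1u]
      rw [← add_smul, norm_smul, hu1, mul_one, Real.norm_eq_abs,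
        abs_of_nonneg (by positivity)]
    have hx2K : x2 ∈ K := by
      rw [hKdef, Metric.mem_closedBall, dist_zero_right, hx2norm]
      have : ε ≤ R - ‖x1‖ := min_le_right _ _
      linarith
    have hdist : dist x1 x2 ≤ r := by
      rw [dist_eq_norm]
      have h3 : x1 - x2 = -(ε • u) := by rw [hx2def]; abel
      rw [h3, norm_neg, norm_smul, hu1, mul_one, Real.norm_eq_abs, abs_of_pos hεpos]
      exact min_le_left _ _
    have hwx2 : w x2 = 0 := (key x1 hx1K hx1Z.2).1 x2 hx2K hdist
    have hle : ‖x2‖ ≤ ‖x1‖ := hx1max (⟨hx2K, hwx2⟩ : x2 ∈ {x | x ∈ K ∧ w x = 0})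
    rw [hx2norm] at hle
    linarith
  -- contradiction: the annulus integral must be positive
  have hA0 := (key x1 hx1K hx1Z.2).2
  have hx1ne : x1 ≠ 0 := by
    intro h; rw [h, norm_zero] at hx1R; exact hR.ne hx1R
  set ε' := min r (R' - R) with hε'def
  have hε'pos : 0 < ε' := lt_min hr (by linarith)
  set u1 := ‖x1‖⁻¹ • x1 with hu1def
  have hu1n : ‖u1‖ = 1 := by
    rw [hu1def, norm_smul, norm_inv, norm_norm, inv_mul_cancel₀ (norm_ne_zero_iff.2 hx1ne)]
  have hx1u : x1 = ‖x1‖ • u1 := by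
    rw [hu1def, smul_smul, mul_inv_cancel₀ (norm_ne_zero_iff.2 hx1ne), one_smul]
  set y1 := x1 + (ε' / 2) • u1 with hy1def
  have hy1norm : ‖y1‖ = R + ε' / 2 := by
    rw [hy1def]; nth_rewrite 1 [hx1u]
    rw [← add_smul, norm_smul, hu1n, mul_one, Real.norm_eq_abs,
      abs_of_nonneg (by positivity), hx1R]
  have hε'le : ε' ≤ R' - R := min_le_right _ _
  have hy1ltR' : ‖y1‖ < R' := by rw [hy1norm]; linarith
  have hy1gtR : R < ‖y1‖ := by rw [hy1norm]; linarith
  have hy1K' : y1 ∈ K' := by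
    rw [hK'def, Metric.mem_closedBall, dist_zero_right]; exact hy1ltR'.le
  have hdisty1 : dist x1 y1 ≤ r := by
    rw [dist_eq_norm]
    have h3 : x1 - y1 = -((ε' / 2) • u1) := by rw [hy1def]; abel
    rw [h3, norm_neg, norm_smul, hu1n, mul_one, Real.norm_eq_abs,
      abs_of_pos (by linarith)]
    have := min_le_left r (R' - R)
    linarith
  have hgpos : 0 < V x1 y1 * φR' y1 :=
    mul_pos (hVpos _ _ hdisty1) (hφR'pos y1 hy1K')
  have hVx1 : Continuous fun y => V x1 y := hVc.comp (Continuous.prodMk_right x1)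
  have hcont : ContinuousAt (fun y => V x1 y * φR' y) y1 := by
    have h2 : ContinuousAt φR' y1 := by
      apply hφR'c.continuousAt
      exact hK'def ▸ Metric.closedBall_mem_nhds_of_mem
        (by rw [Metric.mem_ball, dist_zero_right]; exact hy1ltR')
    exact hVx1.continuousAt.mul h2
  obtain ⟨U, hUo, hyU, hUb⟩ := nbhd_of_pos_aux (fun y => V x1 y * φR' y) Set.univ y1
    hcont.continuousWithinAt hgpos
  set U' := U ∩ (Metric.ball (0 : EuclideanSpace ℝ (Fin N)) R' \ K) with hU'def
  have hU'o : IsOpen U' :=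
    hUo.inter (Metric.isOpen_ball.sdiff (hKdef ▸ Metric.isClosed_closedBall))
  have hy1U' : y1 ∈ U' := by
    refine ⟨hyU, ?_, ?_⟩
    · rw [Metric.mem_ball, dist_zero_right]; exact hy1ltR'
    · rw [hKdef, Metric.mem_closedBall, dist_zero_right]; push_neg; exact hy1gtR
  have hU'sub : U' ⊆ K' \ K := fun y hy =>
    ⟨hK'def ▸ Metric.ball_subset_closedBall hy.2.1, hy.2.2⟩
  have hfin : volume U' < ⊤ :=
    lt_of_le_of_lt (measure_mono (fun y hy => hy.2.1)) measure_ball_lt_top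
  have hint2' : IntegrableOn (fun y => V x1 y * φR' y) K' :=
    (hVx1.continuousOn.mul hφR'c).integrableOn_compact hK'c
  have hposint := int_pos_aux (fun y => V x1 y * φR' y) (K' \ K) U'
    (hK'm.diff hKm) (hint2'.mono_set Set.diff_subset)
    (fun y hy => mul_nonneg (hVnn _ _) (hφR'pos y hy.1).le)
    hU'o ⟨y1, hy1U'⟩ hU'sub hfin _ (half_pos hgpos)
    (fun y hy => hUb y ⟨hy.1, trivial⟩)
  rw [hA0] at hposint
  exact lt_irrefl 0 hposint
end

section
/- Under the same setting, if additionally V is ℤ^N-periodic (V(x+k,y+k)=V(x,y)) and λ₁ is the principal periodic eigenvalue of Lφ(x) = ∫_{ℝ^N} V(x,y)φ(y)dy on continuous 1-periodic functions (with positive periodic eigenfunction φ_p), then λ_R < λ₁ for every R > 0. -/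
open MeasureTheory

/-- If moreover `V` is `ℤ^N`-periodic and `λ₁` is the principal periodic eigenvalue of
`Lφ(x) = ∫_{ℝ^N} V(x,y) φ(y) dy` (with positive periodic eigenfunction `φ_p`), then the
principal eigenvalue `λ_R` of the truncation to the ball `B_R` satisfies `λ_R < λ₁`. -/
theorem stmt7 (N : ℕ) (hN : 1 ≤ N) (r : ℝ) (hr : 0 < r)
    (V : EuclideanSpace ℝ (Fin N) → EuclideanSpace ℝ (Fin N) → ℝ)
    (hVc : Continuous (Function.uncurry V)) (hVnn : ∀ x y, 0 ≤ V x y)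
    (hVpos : ∀ x y, dist x y ≤ r → 0 < V x y)
    (hVper : ∀ (k : Fin N → ℤ) (x y : EuclideanSpace ℝ (Fin N)),
      V (x + (WithLp.equiv 2 (Fin N → ℝ)).symm (fun i => (k i : ℝ)))
        (y + (WithLp.equiv 2 (Fin N → ℝ)).symm (fun i => (k i : ℝ))) = V x y)
    (hVint : ∀ x, Integrable (V x))
    (hIcont : Continuous fun x => ∫ y, V x y)
    (R : ℝ) (hR : 0 < R) (lamR lam1 : ℝ)
    (φR : EuclideanSpace ℝ (Fin N) → ℝ)
    (hφRc : ContinuousOn φR (Metric.closedBall 0 R))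
    (hφRpos : ∀ x ∈ Metric.closedBall (0 : EuclideanSpace ℝ (Fin N)) R, 0 < φR x)
    (heigR : ∀ x ∈ Metric.closedBall (0 : EuclideanSpace ℝ (Fin N)) R,
      (∫ y in Metric.closedBall (0 : EuclideanSpace ℝ (Fin N)) R, V x y * φR y) = lamR * φR x)
    (φp : EuclideanSpace ℝ (Fin N) → ℝ)
    (hφpc : Continuous φp) (hφppos : ∀ x, 0 < φp x)
    (hφpper : ∀ (k : Fin N → ℤ) (x : EuclideanSpace ℝ (Fin N)),
      φp (x + (WithLp.equiv 2 (Fin N → ℝ)).symm (fun i => (k i : ℝ))) = φp x)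
    (hφpint : ∀ x, Integrable fun y => V x y * φp y)
    (heig : ∀ x, (∫ y, V x y * φp y) = lam1 * φp x) :
    lamR < lam1 := by
  classical
  set K : Set (EuclideanSpace ℝ (Fin N)) := Metric.closedBall 0 R with hKdef
  have hKc : IsCompact K := isCompact_closedBall _ _
  have hKclosed : IsClosed K := Metric.isClosed_closedBall
  have hKm : MeasurableSet K := hKclosed.measurableSet
  have hKne : K.Nonempty := ⟨0, by simp [hKdef, hR.le]⟩
  have hφpne : ∀ x, φp x ≠ 0 := fun x => (hφppos x).ne'
  -- continuity of y ↦ V x y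
  have hVxc : ∀ x : EuclideanSpace ℝ (Fin N), Continuous fun y => V x y := fun x =>
    hVc.comp (continuous_const.prodMk continuous_id)
  -- the ratio
  have hψc : ContinuousOn (fun x => φR x / φp x) K :=
    hφRc.div hφpc.continuousOn (fun x _ => hφpne x)
  obtain ⟨x₀, hx₀K, hx₀max⟩ := hKc.exists_isMaxOn hKne hψc
  set M : ℝ := φR x₀ / φp x₀ with hMdef
  have hMpos : 0 < M := div_pos (hφRpos x₀ hx₀K) (hφppos x₀)
  have hMle : ∀ y ∈ K, φR y ≤ M * φp y := by
    intro y hy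
    have h1 : φR y / φp y ≤ M := hx₀max hy
    calc φR y = φR y / φp y * φp y := (div_mul_cancel₀ _ (hφpne y)).symm
    _ ≤ M * φp y := mul_le_mul_of_nonneg_right h1 (hφppos y).le
  have hMx₀ : φR x₀ = M * φp x₀ := (div_mul_cancel₀ (φR x₀) (hφpne x₀)).symm
  -- the coincidence set
  set S : Set (EuclideanSpace ℝ (Fin N)) :=
    K ∩ (fun x => φR x - M * φp x) ⁻¹' {0} with hSdef
  have hSne : S.Nonempty := ⟨x₀, hx₀K, by simp [hMx₀]⟩
  have hScl : IsClosed S :=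
    (hφRc.sub (continuousOn_const.mul hφpc.continuousOn)).preimage_isClosed_of_isClosed
      hKclosed isClosed_singleton
  have hScompact : IsCompact S := hKc.of_isClosed_subset hScl Set.inter_subset_left
  obtain ⟨x₁, hx₁S, hx₁max⟩ := hScompact.exists_isMaxOn hSne continuous_norm.continuousOn
  have hx₁K : x₁ ∈ K := hx₁S.1
  have hx₁eq : φR x₁ = M * φp x₁ := by
    have := hx₁S.2
    simp only [Set.mem_preimage, Set.mem_singleton_iff, sub_eq_zero] at this
    exact this
  have hx₁norm : ‖x₁‖ ≤ R := mem_closedBall_zero_iff.mp hx₁K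
  -- by contradiction
  by_contra hcon
  have hle : lam1 ≤ lamR := not_lt.mp hcon
  -- integrability facts
  have I1 : IntegrableOn (fun y => V x₁ y * φR y) K :=
    ContinuousOn.integrableOn_compact hKc ((hVxc x₁).continuousOn.mul hφRc)
  have I2 : Integrable (fun y => M * (V x₁ y * φp y)) := (hφpint x₁).const_mul M
  -- the chain of (in)equalities
  set A : ℝ := ∫ y in K, V x₁ y * φR y with hAdef
  set B : ℝ := ∫ y in K, M * (V x₁ y * φp y) with hBdef
  set C : ℝ := ∫ y, M * (V x₁ y * φp y) with hCdef
  have hA : A = lamR * φR x₁ := heigR x₁ hx₁K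
  have hAB : A ≤ B := by
    refine setIntegral_mono_on I1 I2.integrableOn hKm ?_
    intro y hy
    calc V x₁ y * φR y ≤ V x₁ y * (M * φp y) :=
          mul_le_mul_of_nonneg_left (hMle y hy) (hVnn x₁ y)
    _ = M * (V x₁ y * φp y) := by ring
  have hBC : B ≤ C :=
    setIntegral_le_integral I2 (Filter.Eventually.of_forall fun y =>
      mul_nonneg hMpos.le (mul_nonneg (hVnn x₁ y) (hφppos y).le))
  have hC : C = M * (lam1 * φp x₁) := by
    rw [hCdef, integral_const_mul, heig x₁]
  have hCA : C ≤ A := by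
    rw [hC, hA]
    calc M * (lam1 * φp x₁) = lam1 * φR x₁ := by rw [hx₁eq]; ring
    _ ≤ lamR * φR x₁ := mul_le_mul_of_nonneg_right hle (hφRpos x₁ hx₁K).le
  have hABeq : A = B := le_antisymm hAB (hBC.trans hCA)
  have hBCeq : B = C := le_antisymm hBC (hCA.trans hAB)
  -- case split on whether x₁ is on the boundary
  rcases lt_or_eq_of_le hx₁norm with hlt | heq
  · -- interior case: find a point y strictly further out, inside the ball, within r of x₁
    obtain ⟨y, hdist, hgt, hylt⟩ :
        ∃ y : EuclideanSpace ℝ (Fin N), dist x₁ y ≤ r ∧ ‖x₁‖ < ‖y‖ ∧ ‖y‖ < R := by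
      set t : ℝ := min r ((R - ‖x₁‖) / 2) with htdef
      have ht0 : 0 < t := lt_min hr (by linarith)
      have htr : t ≤ r := min_le_left _ _
      have htR : ‖x₁‖ + t < R := by
        have : t ≤ (R - ‖x₁‖) / 2 := min_le_right _ _
        linarith
      by_cases hx : x₁ = 0
      · refine ⟨t • (EuclideanSpace.single (⟨0, hN⟩ : Fin N) (1 : ℝ)), ?_, ?_, ?_⟩
        · rw [hx, dist_zero_left, norm_smul, EuclideanSpace.norm_single]
          simp only [norm_one, mul_one, Real.norm_eq_abs, abs_of_pos ht0]
          exact htr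
        · rw [hx, norm_smul, EuclideanSpace.norm_single]
          simp only [norm_one, mul_one, Real.norm_eq_abs, abs_of_pos ht0, norm_zero]
          exact ht0
        · rw [norm_smul, EuclideanSpace.norm_single]
          simp only [norm_one, mul_one, Real.norm_eq_abs, abs_of_pos ht0]
          have hx0 : ‖x₁‖ = 0 := by simp [hx]
          linarith
      · have hn0 : 0 < ‖x₁‖ := norm_pos_iff.mpr hx
        refine ⟨(1 + t / ‖x₁‖) • x₁, ?_, ?_, ?_⟩
        · rw [dist_eq_norm]
          have hsub : x₁ - (1 + t / ‖x₁‖) • x₁ = (-(t / ‖x₁‖)) • x₁ := by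
            rw [sub_eq_iff_eq_add, ← add_smul,
              show -(t / ‖x₁‖) + (1 + t / ‖x₁‖) = 1 by ring, one_smul]
          rw [hsub, norm_smul, norm_neg, Real.norm_eq_abs, abs_of_pos (div_pos ht0 hn0),
            div_mul_cancel₀ _ hn0.ne']
          exact htr
        · rw [norm_smul, Real.norm_eq_abs,
            abs_of_pos (by positivity : (0:ℝ) < 1 + t / ‖x₁‖)]
          nlinarith [div_pos ht0 hn0]
        · rw [norm_smul, Real.norm_eq_abs,
            abs_of_pos (by positivity : (0:ℝ) < 1 + t / ‖x₁‖),
            add_mul, one_mul, div_mul_cancel₀ _ hn0.ne']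
          linarith
    have hyK : y ∈ K := mem_closedBall_zero_iff.mpr hylt.le
    have hyS : y ∉ S := fun hy => absurd (hx₁max hy) (not_le.mpr hgt)
    have hystrict : φR y < M * φp y := by
      rcases lt_or_eq_of_le (hMle y hyK) with h | h
      · exact h
      · exact absurd ⟨hyK, by simp [h]⟩ hyS
    have hg0 : (∫ z in K, (M * (V x₁ z * φp z) - V x₁ z * φR z)) = 0 := by
      rw [integral_sub I2.integrableOn I1, ← hBdef, ← hAdef, hABeq, sub_self]
    have hgy : 0 < M * (V x₁ y * φp y) - V x₁ y * φR y := by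
      have hV : 0 < V x₁ y := hVpos x₁ y hdist
      have h2 : V x₁ y * φR y < V x₁ y * (M * φp y) :=
        mul_lt_mul_of_pos_left hystrict hV
      nlinarith
    -- continuity on K gives a neighborhood where the integrand is positive
    have hgc : ContinuousOn (fun z => M * (V x₁ z * φp z) - V x₁ z * φR z) K :=
      (continuousOn_const.mul ((hVxc x₁).continuousOn.mul hφpc.continuousOn)).sub
        ((hVxc x₁).continuousOn.mul hφRc)
    have hnhds : {z | 0 < M * (V x₁ z * φp z) - V x₁ z * φR z} ∈ nhdsWithin y K :=
      (hgc y hyK) (isOpen_Ioi.mem_nhds hgy)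
    obtain ⟨U, hUopen, hyU, hUsub⟩ := mem_nhdsWithin.mp hnhds
    have hpos : 0 < ∫ z in K, (M * (V x₁ z * φp z) - V x₁ z * φR z) := by
      rw [setIntegral_pos_iff_support_of_nonneg_ae
        (by
          filter_upwards [ae_restrict_mem hKm] with z hz
          have : V x₁ z * φR z ≤ M * (V x₁ z * φp z) := by
            calc V x₁ z * φR z ≤ V x₁ z * (M * φp z) :=
                  mul_le_mul_of_nonneg_left (hMle z hz) (hVnn x₁ z)
            _ = M * (V x₁ z * φp z) := by ring
          simpa using sub_nonneg.mpr this)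
        (show IntegrableOn (fun z => M * (V x₁ z * φp z) - V x₁ z * φR z) K volume from
          I2.integrableOn.sub I1)]
      have hop : IsOpen (U ∩ Metric.ball (0 : EuclideanSpace ℝ (Fin N)) R) :=
        hUopen.inter Metric.isOpen_ball
      have hne : (U ∩ Metric.ball (0 : EuclideanSpace ℝ (Fin N)) R).Nonempty :=
        ⟨y, hyU, mem_ball_zero_iff.mpr hylt⟩
      refine lt_of_lt_of_le (hop.measure_pos volume hne) (measure_mono ?_)
      rintro z ⟨hzU, hzB⟩
      have hzK : z ∈ K := Metric.ball_subset_closedBall hzB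
      exact ⟨(hUsub ⟨hzU, hzK⟩).ne', hzK⟩
    exact absurd hg0 hpos.ne'
  · -- boundary case: mass escapes outside the ball
    have hx₁ne : x₁ ≠ 0 := by
      intro h; rw [h] at heq; simp at heq; exact hR.ne heq
    set y : EuclideanSpace ℝ (Fin N) := (1 + r / R) • x₁ with hydef
    have hnx₁ : ‖x₁‖ = R := heq
    have hdist : dist x₁ y ≤ r := by
      rw [dist_eq_norm, hydef]
      have hsub : x₁ - (1 + r / R) • x₁ = (-(r / R)) • x₁ := by
        rw [sub_eq_iff_eq_add, ← add_smul,
          show -(r / R) + (1 + r / R) = 1 by ring, one_smul]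
      rw [hsub, norm_smul, norm_neg, Real.norm_eq_abs, abs_of_pos (div_pos hr hR),
        hnx₁, div_mul_cancel₀ _ hR.ne']
    have hyout : R < ‖y‖ := by
      rw [hydef, norm_smul, Real.norm_eq_abs,
        abs_of_pos (by positivity : (0:ℝ) < 1 + r / R), hnx₁,
        add_mul, one_mul, div_mul_cancel₀ _ hR.ne']
      linarith
    have hyKc : y ∈ Kᶜ := by
      simp only [Set.mem_compl_iff, hKdef, mem_closedBall_zero_iff, not_le]
      exact hyout
    have hcompl : (∫ z in Kᶜ, M * (V x₁ z * φp z)) = 0 := by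
      have h3 := integral_add_compl hKm I2
      rw [← hBdef, ← hCdef, hBCeq] at h3
      linarith
    have hpos : 0 < ∫ z in Kᶜ, M * (V x₁ z * φp z) := by
      rw [setIntegral_pos_iff_support_of_nonneg_ae
        (Filter.Eventually.of_forall fun z =>
          mul_nonneg hMpos.le (mul_nonneg (hVnn x₁ z) (hφppos z).le))
        I2.integrableOn]
      have hop : IsOpen ({z : EuclideanSpace ℝ (Fin N) | 0 < M * (V x₁ z * φp z)} ∩ Kᶜ) :=
        (isOpen_lt continuous_const (continuous_const.mul ((hVxc x₁).mul hφpc))).inter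
          hKclosed.isOpen_compl
      have hne : ({z : EuclideanSpace ℝ (Fin N) | 0 < M * (V x₁ z * φp z)} ∩ Kᶜ).Nonempty :=
        ⟨y, mul_pos hMpos (mul_pos (hVpos x₁ y hdist) (hφppos y)), hyKc⟩
      refine lt_of_lt_of_le (hop.measure_pos volume hne) (measure_mono ?_)
      rintro z ⟨hz1, hz2⟩
      exact ⟨ne_of_gt hz1, hz2⟩
    exact absurd hcompl hpos.ne'
end

section
/- Suppose λ₁ ≤ 1, where λ₁ is the principal periodic eigenvalue of Lφ(x)=∫V(x,y)g'(0)φ(y)dy with positive periodic eigenfunction φ_p satisfying inf φ_p > 0, and suppose g satisfies g(z) ≤ g'(0)z for z ≥ 0 with equality only at z = 0 (i.e., g(z) < g'(0)z for z > 0). Then the only nonnegative bounded continuous solution U of U(x) = ∫V(x,y)g(U(y))dy on ℝ^N is U ≡ 0, provided V is ℤ^N-periodic, V(x,y) > 0 for |x−y| ≤ r, and translations of bounded solutions have convergent subsequences (equicontinuity hypothesis on V). -/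
open MeasureTheory

set_option maxHeartbeats 1000000 in
/-- If the principal periodic eigenvalue `λ₁` of the linearization is `≤ 1`, and
`g(z) < g'(0) z` for `z > 0`, then the only nonnegative bounded continuous solution of the
stationary equation `U(x) = ∫ V(x,y) g(U(y)) dy` is `U ≡ 0`. -/
theorem stmt10 (N : ℕ) (hN : 1 ≤ N) (r : ℝ) (hr : 0 < r)
    (V : (Fin N → ℝ) → (Fin N → ℝ) → ℝ) (hVnn : ∀ x y, 0 ≤ V x y)
    (hVmeas : Measurable (Function.uncurry V))
    (hVper : ∀ (k : Fin N → ℤ) (x y : Fin N → ℝ),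
      V (x + fun i => (k i : ℝ)) (y + fun i => (k i : ℝ)) = V x y)
    (hVpos : ∀ x y, dist x y ≤ r → 0 < V x y)
    (hVint : ∀ x, Integrable (V x))
    (hVbdd : ∃ B, ∀ x, (∫ y, V x y) ≤ B)
    (hVequi : ∀ ε > (0:ℝ), ∃ δ > (0:ℝ), ∀ x₁ x₂ : Fin N → ℝ, dist x₁ x₂ ≤ δ →
      (∫ y, |V x₁ y - V x₂ y|) ≤ ε)
    (g : ℝ → ℝ) (hgc : Continuous g) (hgmono : MonotoneOn g (Set.Ici 0))
    (hgzero : g 0 = 0) (g0 : ℝ) (hg0 : 0 < g0)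
    (hgub : ∀ z > (0:ℝ), g z < g0 * z)
    (lam1 : ℝ) (hlam : lam1 ≤ 1)
    (φp : (Fin N → ℝ) → ℝ) (hφpc : Continuous φp)
    (hφpper : ∀ (k : Fin N → ℤ) (x : Fin N → ℝ), φp (x + fun i => (k i : ℝ)) = φp x)
    (hφppos : ∃ m > (0:ℝ), ∀ x, m ≤ φp x)
    (heig : ∀ x, (∫ y, V x y * (g0 * φp y)) = lam1 * φp x) :
    ∀ U : (Fin N → ℝ) → ℝ, Continuous U → (∀ x, 0 ≤ U x) → (∃ B, ∀ x, U x ≤ B) →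
      (∀ x, U x = ∫ y, V x y * g (U y)) → ∀ x, U x = 0 := by
  intro U hUc hUnn hUbdd hUeq
  obtain ⟨B, hB⟩ := hUbdd
  obtain ⟨m, hm, hmφ⟩ := hφppos
  have hBnn : (0:ℝ) ≤ B := le_trans (hUnn 0) (hB 0)
  -- the unit cube
  have hCc : IsCompact (Set.Icc (0 : Fin N → ℝ) 1) := isCompact_Icc
  have hCne : (Set.Icc (0 : Fin N → ℝ) 1).Nonempty := ⟨0, le_rfl, fun i => zero_le_one⟩
  -- periodic reduction
  have reduce : ∀ (f : (Fin N → ℝ) → ℝ),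
      (∀ (k : Fin N → ℤ) (x : Fin N → ℝ), f (x + fun i => (k i : ℝ)) = f x) →
      ∀ x, ∃ z ∈ Set.Icc (0 : Fin N → ℝ) 1, f z = f x := by
    intro f hf x
    refine ⟨x + fun i => ((-⌊x i⌋ : ℤ) : ℝ), ⟨fun i => ?_, fun i => ?_⟩, hf _ x⟩
    · have h1 := Int.fract_nonneg (x i)
      rw [Int.fract] at h1
      show (0:ℝ) ≤ x i + ((-⌊x i⌋ : ℤ) : ℝ)
      push_cast
      linarith
    · have h2 := (Int.fract_lt_one (x i)).le
      rw [Int.fract] at h2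
      show x i + ((-⌊x i⌋ : ℤ) : ℝ) ≤ (1 : Fin N → ℝ) i
      have : ((1 : Fin N → ℝ) i) = (1:ℝ) := rfl
      rw [this]
      push_cast
      linarith
  -- upper bound for φp
  obtain ⟨xM, hxM, hxMmax⟩ := hCc.exists_isMaxOn hCne hφpc.continuousOn
  set Mφ := φp xM with hMφdef
  have hMφ : ∀ x, φp x ≤ Mφ := by
    intro x
    obtain ⟨z, hz, hze⟩ := reduce φp hφpper x
    rw [← hze]
    exact isMaxOn_iff.1 hxMmax z hz
  have hMφpos : 0 < Mφ := lt_of_lt_of_le hm (hmφ xM)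
  -- the mass function G
  set G : (Fin N → ℝ) → ℝ := fun x => ∫ y, V x y with hG
  have hGper : ∀ (k : Fin N → ℤ) (x : Fin N → ℝ), G (x + fun i => (k i : ℝ)) = G x := by
    intro k x
    have h1 : (∫ y, V (x + fun i => (k i : ℝ)) (y + fun i => (k i : ℝ)))
        = ∫ y, V (x + fun i => (k i : ℝ)) y :=
      integral_add_right_eq_self (V (x + fun i => (k i : ℝ))) (fun i => (k i : ℝ))
    have h2 : (∫ y, V (x + fun i => (k i : ℝ)) (y + fun i => (k i : ℝ))) = ∫ y, V x y := by
      congr 1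
      funext y
      exact hVper k x y
    simp only [hG]
    rw [← h1, h2]
  have hGc : Continuous G := by
    rw [Metric.continuous_iff]
    intro b ε hε
    obtain ⟨δ, hδ, hδ2⟩ := hVequi (ε/2) (by linarith)
    refine ⟨δ, hδ, fun a ha => ?_⟩
    have h0 : (∫ y, V a y) - (∫ y, V b y) = ∫ y, (V a y - V b y) :=
      (integral_sub (hVint a) (hVint b)).symm
    have h1 : |G a - G b| ≤ ∫ y, |V a y - V b y| := by
      simp only [hG]
      rw [h0]
      calc |∫ y, (V a y - V b y)| = ‖∫ y, (V a y - V b y)‖ := (Real.norm_eq_abs _).symm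
        _ ≤ ∫ y, ‖V a y - V b y‖ := norm_integral_le_integral_norm _
        _ = ∫ y, |V a y - V b y| := by simp [Real.norm_eq_abs]
    have h2 := hδ2 a b ha.le
    rw [Real.dist_eq]
    calc |G a - G b| ≤ ε/2 := le_trans h1 h2
      _ < ε := by linarith
  have hGpos : ∀ x, 0 < G x := by
    intro x
    simp only [hG]
    rw [integral_pos_iff_support_of_nonneg (fun y => hVnn x y) (hVint x)]
    refine lt_of_lt_of_le (Metric.measure_closedBall_pos volume x hr) (measure_mono ?_)
    intro y hy
    exact (hVpos x y (by rwa [dist_comm, ← Metric.mem_closedBall])).ne'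
  obtain ⟨x0, hx0, hx0min⟩ := hCc.exists_isMinOn hCne hGc.continuousOn
  set c0 := G x0 with hc0def
  have hc0pos : 0 < c0 := hGpos x0
  have hGlb : ∀ x, c0 ≤ G x := by
    intro x
    obtain ⟨z, hz, hze⟩ := reduce G hGper x
    rw [← hze]
    exact isMinOn_iff.1 hx0min z hz
  -- facts about g
  have hgnn : ∀ z, 0 ≤ z → 0 ≤ g z := by
    intro z hz
    have := hgmono (Set.mem_Ici.2 le_rfl) (Set.mem_Ici.2 hz) hz
    rwa [hgzero] at this
  have hgle : ∀ z, 0 ≤ z → g z ≤ g0 * z := by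
    intro z hz
    rcases eq_or_lt_of_le hz with h | h
    · simp [← h, hgzero]
    · exact (hgub z h).le
  -- measurability / integrability
  have hVxmeas : ∀ x, Measurable (V x) := fun x => hVmeas.comp measurable_prodMk_left
  have hIntMul : ∀ (x : Fin N → ℝ) (f : (Fin N → ℝ) → ℝ), Continuous f →
      ∀ Cf : ℝ, (∀ y, |f y| ≤ Cf) → Integrable (fun y => V x y * f y) := by
    intro x f hfc Cf hCf
    refine Integrable.mono' ((hVint x).const_mul Cf) ?_ ?_
    · exact ((hVxmeas x).mul hfc.measurable).aestronglyMeasurable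
    · filter_upwards with y
      rw [Real.norm_eq_abs, abs_mul, abs_of_nonneg (hVnn x y)]
      have h1 := hCf y
      have h2 := hVnn x y
      have h3 := abs_nonneg (f y)
      nlinarith
  -- the supremum s
  set S := Set.range (fun x => U x / φp x) with hS
  have hSne : S.Nonempty := ⟨_, Set.mem_range_self 0⟩
  have hSbdd : BddAbove S := by
    refine ⟨B/m, ?_⟩
    rintro _ ⟨x, rfl⟩
    exact div_le_div₀ hBnn (hB x) hm (hmφ x)
  set s := sSup S with hsdef
  have hsle : ∀ x, U x ≤ s * φp x := by
    intro x
    have h1 : U x / φp x ≤ s := le_csSup hSbdd (Set.mem_range_self x)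
    have h2 : 0 < φp x := lt_of_lt_of_le hm (hmφ x)
    calc U x = (U x / φp x) * φp x := by field_simp
      _ ≤ s * φp x := mul_le_mul_of_nonneg_right h1 h2.le
  by_cases hs : s ≤ 0
  · intro x
    have h1 := hsle x
    have h2 : 0 < φp x := lt_of_lt_of_le hm (hmφ x)
    have h3 := hUnn x
    nlinarith
  push_neg at hs
  exfalso
  -- the quantitative gap κ'
  set B' := max B (s*m/2) with hB'def
  have hIccne : (Set.Icc (s*m/2) B').Nonempty := ⟨s*m/2, le_rfl, le_max_right _ _⟩
  have hgap : Continuous (fun z : ℝ => g0*z - g z) := (continuous_const.mul continuous_id).sub hgc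
  obtain ⟨z0, hz0mem, hz0min⟩ := isCompact_Icc.exists_isMinOn hIccne hgap.continuousOn
  set κ := g0*z0 - g z0 with hκdef
  have hκpos : 0 < κ := sub_pos.2 (hgub z0 (lt_of_lt_of_le (by positivity) hz0mem.1))
  set κ' := min κ (g0*s*m/2) with hκ'def
  have hκ'pos : 0 < κ' := lt_min hκpos (by positivity)
  -- pointwise estimate
  have hpt : ∀ y, g (U y) + κ' ≤ g0 * s * φp y := by
    intro y
    by_cases hy : U y < s*m/2
    · have h1 : g (U y) ≤ g0 * U y := hgle _ (hUnn y)
      have h2 : κ' ≤ g0*s*m/2 := min_le_right _ _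
      have h3 := hmφ y
      have h4 : g0 * U y < g0 * (s*m/2) := by nlinarith
      have h5 : g0 * s * m ≤ g0 * s * φp y := by nlinarith
      linarith
    · push_neg at hy
      have hmem : U y ∈ Set.Icc (s*m/2) B' := ⟨hy, le_trans (hB y) (le_max_left _ _)⟩
      have h1 : g0*z0 - g z0 ≤ g0*(U y) - g (U y) := isMinOn_iff.1 hz0min _ hmem
      have h2 : U y ≤ s * φp y := hsle y
      have h3 : κ' ≤ κ := min_le_left _ _
      have h4 : g0 * U y ≤ g0 * (s * φp y) := by nlinarith
      rw [hκdef] at h3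
      nlinarith
  -- main uniform estimate
  have hmain : ∀ x, U x ≤ s * φp x - κ' * c0 := by
    intro x
    have hI1 : Integrable (fun y => V x y * g (U y)) := by
      refine hIntMul x _ (hgc.comp hUc) (g0 * B) ?_
      intro y
      rw [abs_of_nonneg (hgnn _ (hUnn y))]
      calc g (U y) ≤ g0 * U y := hgle _ (hUnn y)
        _ ≤ g0 * B := by nlinarith [hB y]
    have hI2 : Integrable (fun y => V x y * (g0 * s * φp y)) := by
      refine hIntMul x _ (continuous_const.mul hφpc) (g0 * s * Mφ) ?_
      intro y
      have hφy : (0:ℝ) < φp y := lt_of_lt_of_le hm (hmφ y)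
      rw [abs_of_nonneg (mul_pos (mul_pos hg0 hs) hφy).le]
      exact mul_le_mul_of_nonneg_left (hMφ y) (mul_pos hg0 hs).le
    have hI3 : Integrable (fun y => V x y * (g0*s*φp y) - κ' * V x y) :=
      hI2.sub ((hVint x).const_mul κ')
    have step1 : U x ≤ ∫ y, (V x y * (g0*s*φp y) - κ' * V x y) := by
      rw [hUeq x]
      refine integral_mono hI1 hI3 ?_
      intro y
      have h1 := hpt y
      have h2 := hVnn x y
      show V x y * g (U y) ≤ V x y * (g0*s*φp y) - κ' * V x y
      nlinarith [mul_le_mul_of_nonneg_left h1 h2]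
    have step2 : (∫ y, (V x y * (g0*s*φp y) - κ' * V x y))
        = s * (lam1 * φp x) - κ' * G x := by
      rw [integral_sub hI2 ((hVint x).const_mul κ'), integral_const_mul κ' (V x)]
      have h1 : (∫ y, V x y * (g0*s*φp y)) = ∫ y, s * (V x y * (g0 * φp y)) := by
        congr 1; funext y; ring
      rw [h1, integral_const_mul s, heig x]
    have h4 : s * (lam1 * φp x) ≤ s * φp x := by
      have hφx := lt_of_lt_of_le hm (hmφ x)
      nlinarith [mul_nonneg (sub_nonneg.2 hlam) (mul_pos hs hφx).le]
    have h5 : κ' * c0 ≤ κ' * G x := mul_le_mul_of_nonneg_left (hGlb x) hκ'pos.le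
    linarith [step1, step2.le, step2.ge]
  -- contradiction
  have hcontra : s ≤ s - κ'*c0/Mφ := by
    rw [hsdef]
    apply csSup_le hSne
    rintro _ ⟨x, rfl⟩
    have hφx : 0 < φp x := lt_of_lt_of_le hm (hmφ x)
    rw [div_le_iff₀ hφx]
    have h1 := hmain x
    have h2 : (κ'*c0/Mφ) * φp x ≤ κ'*c0 := by
      rw [div_mul_eq_mul_div, div_le_iff₀ hMφpos]
      nlinarith [hMφ x, mul_pos hκ'pos hc0pos]
    rw [← hsdef]
    nlinarith
  have : 0 < κ'*c0/Mφ := div_pos (mul_pos hκ'pos hc0pos) hMφpos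
  linarith
end
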